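/- For every positive integer n, every real d with 0 ≤ d ≤ 2, and every vector v ∈ ℝⁿ with ‖v‖ = d (Euclidean norm), the volume of the intersection of the closed unit Euclidean ball B with its translate B + v satisfies vol(B ∩ (B + v)) / vol(B) ≥ √(1/(2πn)) · (1 − d²/4)^((n+1)/2), where vol denotes n-dimensional Lebesgue measure. -/

import Mathlib

open MeasureTheory Pointwise

private lemma quad_nonneg' {A B C : ℝ} (hA : 0 ≤ A) (hC : 0 ≤ C) (hB0 : 0 ≤ B)
    (hB : B ^ 2 = 4 * A * C) (t : ℝ) : 0 ≤ A * t ^ 2 - B * t + C := by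
  have hB' : B = 2 * (Real.sqrt A * Real.sqrt C) := by
    have h1 : B = Real.sqrt (B ^ 2) := (Real.sqrt_sq hB0).symm
    rw [h1, hB, show (4 : ℝ) * A * C = 2 ^ 2 * (A * C) by ring,
      Real.sqrt_mul (by positivity), Real.sqrt_sq (by norm_num), Real.sqrt_mul hA]
  have h2 : A * t ^ 2 - B * t + C = (Real.sqrt A * t - Real.sqrt C) ^ 2 := by
    rw [hB']
    linear_combination (-(t ^ 2)) * Real.sq_sqrt hA - Real.sq_sqrt hC
  rw [h2]; exact sq_nonneg _

private lemma key_ineq {d N m s q r α β : ℝ} (hd0 : 0 ≤ d)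
    (hm : m = 1 - d ^ 2 / 4) (hm0 : 0 ≤ m) (hN1 : (0:ℝ) < N + 1)
    (hs2 : s ^ 2 = N / (N + 1)) (hq2 : q ^ 2 = 4 + d ^ 2 * N) (hr2 : r ^ 2 = m)
    (hqpos : 0 < q) (hs0 : 0 ≤ s) (hr0 : 0 ≤ r) (hN0 : 0 ≤ N)
    (hα : α = 2 * s * m / q) (hβ : β = s * r) (t : ℝ) :
    (d / 2 + α * t) ^ 2 + β ^ 2 * (1 - t ^ 2) ≤ 1 := by
  have hq0 : (0:ℝ) < 4 + d ^ 2 * N := by rw [← hq2]; positivity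
  have hα0 : 0 ≤ α := by rw [hα]; positivity
  have hβ2 : β ^ 2 = N / (N + 1) * m := by rw [hβ, mul_pow, hs2, hr2]
  have hα2 : α ^ 2 = 4 * (N / (N + 1)) * m ^ 2 / (4 + d ^ 2 * N) := by
    rw [hα, div_pow, hq2, mul_pow, mul_pow, hs2]; ring
  have hAeq : β ^ 2 - α ^ 2 = N * m * d ^ 2 / (4 + d ^ 2 * N) := by
    rw [hβ2, hα2, hm]; field_simp; ring
  have hA0 : 0 ≤ β ^ 2 - α ^ 2 := by rw [hAeq]; positivity
  have hC0 : 0 ≤ m - β ^ 2 := by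
    rw [hβ2]
    have h1 : N / (N + 1) ≤ 1 := by rw [div_le_one hN1]; linarith
    nlinarith
  have hACkey : α ^ 2 * d ^ 2 = 4 * (β ^ 2 - α ^ 2) * (m - β ^ 2) := by
    rw [hβ2, hα2, hm]; field_simp; ring
  have h := quad_nonneg' hA0 hC0 (mul_nonneg hα0 hd0) (by rw [mul_pow]; linarith [hACkey]) t
  nlinarith [h]

set_option maxHeartbeats 1000000 in
private lemma core_ineq {n : ℕ} {N d s q : ℝ} (hn : 0 < n) (hN : N = (n : ℝ))
    (hd4 : d ^ 2 ≤ 4) (hs2 : s ^ 2 = N / (N + 1)) (hq2 : q ^ 2 = 4 + d ^ 2 * N)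
    (hqpos : 0 < q) (hs0 : 0 ≤ s) :
    Real.sqrt (1 / (2 * Real.pi * N)) ≤ 2 * s ^ n / q := by
  have hNge1 : (1:ℝ) ≤ N := by rw [hN]; exact_mod_cast hn
  have hNpos : (0:ℝ) < N := by linarith
  have hπ := Real.pi_gt_d6
  have hP0 : (0:ℝ) ≤ (N/(N+1))^n := by positivity
  have hexp : ((N+1)/N) ^ n ≤ Real.exp 1 := by
    have h2 : (N+1)/N ≤ Real.exp (1/N) := by
      rw [add_div, div_self hNpos.ne']
      linarith [Real.add_one_le_exp (1/N)]
    calc ((N+1)/N) ^ n ≤ (Real.exp (1/N)) ^ n := by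
          exact pow_le_pow_left₀ (by positivity) h2 n
      _ = Real.exp (n * (1/N)) := (Real.exp_nat_mul _ n).symm
      _ = Real.exp 1 := by rw [hN]; congr 1; field_simp
  have hpow1 : 1 ≤ Real.exp 1 * (N/(N+1))^n := by
    have h3 : ((N+1)/N)^n * (N/(N+1))^n = 1 := by
      rw [← mul_pow, div_mul_div_comm, show (N+1)*N = N*(N+1) by ring,
        div_self (by positivity)]
      simp
    calc (1:ℝ) = ((N+1)/N)^n * (N/(N+1))^n := h3.symm
      _ ≤ Real.exp 1 * (N/(N+1))^n := mul_le_mul_of_nonneg_right hexp hP0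
  have hE : Real.exp 1 * (N+1) ≤ 2 * Real.pi * N := by
    nlinarith [Real.exp_one_lt_d9]
  have hmain : 1 / (2 * Real.pi * N) ≤ (2 * s ^ n / q)^2 := by
    have h4 : (2 * s ^ n / q)^2 = 4 * (N/(N+1))^n / (4 + d^2*N) := by
      rw [div_pow, hq2, mul_pow, ← pow_mul, show n*2 = 2*n by ring, pow_mul, hs2]
      norm_num
    have hq0 : (0:ℝ) < 4 + d ^ 2 * N := by rw [← hq2]; positivity
    rw [h4, div_le_div_iff₀ (by positivity) hq0]
    have h5 : Real.exp 1 * (N+1) * (N/(N+1))^n ≤ 2 * Real.pi * N * (N/(N+1))^n :=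
      mul_le_mul_of_nonneg_right hE hP0
    have h6 : (N+1) * 1 ≤ (N+1) * (Real.exp 1 * (N/(N+1))^n) :=
      mul_le_mul_of_nonneg_left hpow1 (by positivity)
    nlinarith [h5, h6]
  calc Real.sqrt (1 / (2 * Real.pi * N)) ≤ Real.sqrt ((2 * s ^ n / q)^2) :=
        Real.sqrt_le_sqrt hmain
    _ = 2 * s ^ n / q := Real.sqrt_sq (by positivity)

private lemma mem_bound1 {u β S t : ℝ} (h5 : u ^ 2 + β ^ 2 * (1 - t ^ 2) ≤ 1)
    (hS : S ≤ 1) (ht2 : t ^ 2 ≤ S) : u ^ 2 + β ^ 2 * (S - t ^ 2) ≤ 1 := by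
  nlinarith [sq_nonneg β]

private lemma mem_bound2 {d a β S t : ℝ} (h5 : (d / 2 + a * (-t)) ^ 2 + β ^ 2 * (1 - (-t) ^ 2) ≤ 1)
    (hS : S ≤ 1) (ht2 : t ^ 2 ≤ S) : (d / 2 + a * t - d) ^ 2 + β ^ 2 * (S - t ^ 2) ≤ 1 := by
  nlinarith [sq_nonneg β]

private lemma le_one_of_sq_le_one {x : ℝ} (h0 : 0 ≤ x) (h : x ^ 2 ≤ 1) : x ≤ 1 := by
  nlinarith

set_option maxHeartbeats 2000000 in
theorem ball_intersection_volume_lower_bound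
    (n : ℕ) (hn : 0 < n) (d : ℝ) (hd0 : 0 ≤ d) (hd2 : d ≤ 2)
    (v : EuclideanSpace ℝ (Fin n)) (hv : ‖v‖ = d) :
    (volume (Metric.closedBall (0 : EuclideanSpace ℝ (Fin n)) 1 ∩
        Metric.closedBall v 1)).toReal /
      (volume (Metric.closedBall (0 : EuclideanSpace ℝ (Fin n)) 1)).toReal ≥
      Real.sqrt (1 / (2 * Real.pi * n)) * (1 - d ^ 2 / 4) ^ (((n : ℝ) + 1) / 2) := by
  classical
  have hNpos : (0:ℝ) < n := by positivity
  have hNge1 : (1:ℝ) ≤ n := by exact_mod_cast hn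
  set N : ℝ := (n : ℝ) with hN
  set m : ℝ := 1 - d ^ 2 / 4 with hm
  have hd4 : d ^ 2 ≤ 4 := by nlinarith
  have hm0 : 0 ≤ m := by rw [hm]; nlinarith
  have hN1 : (0:ℝ) < N + 1 := by linarith
  have hq0 : (0:ℝ) < 4 + d ^ 2 * N := by positivity
  set s : ℝ := Real.sqrt (N / (N + 1)) with hs
  set q : ℝ := Real.sqrt (4 + d ^ 2 * N) with hq
  set r : ℝ := Real.sqrt m with hr
  set α : ℝ := 2 * s * m / q with hα
  set β : ℝ := s * r with hβ
  have hs2 : s ^ 2 = N / (N + 1) := Real.sq_sqrt (by positivity)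
  have hq2 : q ^ 2 = 4 + d ^ 2 * N := Real.sq_sqrt hq0.le
  have hr2 : r ^ 2 = m := Real.sq_sqrt hm0
  have hqpos : 0 < q := Real.sqrt_pos.mpr hq0
  have hs0 : 0 ≤ s := Real.sqrt_nonneg _
  have hr0 : 0 ≤ r := Real.sqrt_nonneg _
  have hα0 : 0 ≤ α := by rw [hα]; positivity
  have hβ0 : 0 ≤ β := mul_nonneg hs0 hr0
  have hαβ : α * β ^ (n - 1) = 2 * s ^ n / q * r ^ (n + 1) := by
    obtain ⟨k, hkn⟩ : ∃ k, n = k + 1 := ⟨n - 1, (Nat.succ_pred_eq_of_pos hn).symm⟩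
    have hn1 : n - 1 = k := by omega
    rw [hn1, hkn, hα, hβ, mul_pow, ← hr2]
    field_simp
    ring
  have hrpow : m ^ ((N + 1)/2) = r ^ (n + 1) := by
    have h1 : (N + 1)/2 = (1/2 : ℝ) * ((n + 1 : ℕ) : ℝ) := by rw [hN]; push_cast; ring
    rw [h1, Real.rpow_mul hm0, Real.rpow_natCast]
    congr 1
    rw [hr, Real.sqrt_eq_rpow]
  have hcore : Real.sqrt (1 / (2 * Real.pi * N)) ≤ 2 * s ^ n / q :=
    core_ineq hn hN hd4 hs2 hq2 hqpos hs0
  clear_value N m s q r α β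
  have key : ∀ t : ℝ, (d / 2 + α * t) ^ 2 + β ^ 2 * (1 - t ^ 2) ≤ 1 := fun t =>
    key_ineq hd0 hm hm0 hN1 hs2 hq2 hr2 hqpos hs0 hr0 (by linarith) hα hβ t
  -- geometric setup
  set i₀ : Fin n := ⟨0, hn⟩ with hi₀
  set e : EuclideanSpace ℝ (Fin n) := EuclideanSpace.single i₀ (1:ℝ) with he
  set w : EuclideanSpace ℝ (Fin n) := d • e with hw
  set c : EuclideanSpace ℝ (Fin n) := (d/2) • e with hc
  set co : Fin n → ℝ := fun i => if i = i₀ then α else β with hco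
  set D := Matrix.toEuclideanLin (Matrix.diagonal co) with hD
  set B := Metric.closedBall (0 : EuclideanSpace ℝ (Fin n)) 1 with hB
  have hwnorm : ‖w‖ = d := by
    rw [hw, norm_smul, he, EuclideanSpace.norm_single]
    simp [abs_of_nonneg hd0]
  obtain ⟨f, hfw⟩ : ∃ f : (EuclideanSpace ℝ (Fin n)) ≃ₗᵢ[ℝ] (EuclideanSpace ℝ (Fin n)), f w = v :=
    ⟨Submodule.reflection (ℝ ∙ (w - v))ᗮ, Submodule.reflection_sub (by rw [hwnorm, hv])⟩
  have hinter : ⇑f ⁻¹' (B ∩ Metric.closedBall v 1) = B ∩ Metric.closedBall w 1 := by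
    rw [Set.preimage_inter]
    congr 1
    · rw [hB]
      simpa [map_zero f] using f.isometry.preimage_closedBall 0 1
    · rw [← hfw]
      exact f.isometry.preimage_closedBall w 1
  have hvol_eq : volume (B ∩ Metric.closedBall v 1) = volume (B ∩ Metric.closedBall w 1) := by
    rw [← hinter]
    exact (f.measurePreserving.measure_preimage
      ((Metric.isClosed_closedBall.measurableSet.inter
        Metric.isClosed_closedBall.measurableSet).nullMeasurableSet)).symm
  have hdet : LinearMap.det D = α * β ^ (n - 1) := by
    have h1 : D = ((WithLp.linearEquiv 2 ℝ (Fin n → ℝ)).symm : (Fin n → ℝ) →ₗ[ℝ] _) ∘ₗ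
        Matrix.toLin' (Matrix.diagonal co) ∘ₗ
        (((WithLp.linearEquiv 2 ℝ (Fin n → ℝ)).symm).symm : _ →ₗ[ℝ] (Fin n → ℝ)) := rfl
    rw [h1, LinearMap.det_conj, LinearMap.det_toLin', Matrix.det_diagonal]
    rw [← Finset.mul_prod_erase Finset.univ co (Finset.mem_univ i₀)]
    have h2 : ∀ i ∈ Finset.univ.erase i₀, co i = β := by
      intro i hi
      rw [hco]
      simp only [Finset.mem_erase] at hi
      simp [hi.1]
    rw [Finset.prod_congr rfl h2, Finset.prod_const, Finset.card_erase_of_mem (Finset.mem_univ i₀),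
      Finset.card_univ, Fintype.card_fin]
    simp [hco]
  have happly : ∀ (y : EuclideanSpace ℝ (Fin n)) (i : Fin n), D y i = co i * y i := by
    intro y i
    rw [hD]
    simp [Matrix.toEuclideanLin_apply, Matrix.mulVec_diagonal]
  have hnormsq : ∀ x : EuclideanSpace ℝ (Fin n), ‖x‖ ^ 2 = ∑ i, (x i) ^ 2 := by
    intro x
    rw [EuclideanSpace.norm_eq, Real.sq_sqrt (by positivity)]
    simp [Real.norm_eq_abs, sq_abs]
  have hwi : w i₀ = d := by
    rw [hw, he]
    simp [EuclideanSpace.single_apply]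
  -- containment
  have hsub : c +ᵥ (⇑D '' B) ⊆ B ∩ Metric.closedBall w 1 := by
    rintro x hx
    obtain ⟨z, ⟨y, hyB, rfl⟩, rfl⟩ := hx
    have hyn : ‖y‖ ^ 2 ≤ 1 := by
      have h1 : ‖y‖ ≤ 1 := by simpa [hB, dist_zero_right] using hyB
      exact pow_le_one₀ (norm_nonneg y) h1
    set t : ℝ := y i₀ with ht
    have hsum : ∑ i, (y i) ^ 2 ≤ 1 := by rw [← hnormsq]; exact hyn
    have ht2 : t ^ 2 ≤ ∑ i, (y i) ^ 2 := by
      rw [ht]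
      exact Finset.single_le_sum (f := fun i => (y i)^2) (fun i _ => sq_nonneg _)
        (Finset.mem_univ i₀)
    have hcoord : ∀ i, (c + D y) i = (if i = i₀ then d/2 + α * t else β * y i) := by
      intro i
      have h1 : (c + D y) i = c i + D y i := rfl
      rw [h1, happly, hc, he, hco]
      by_cases hii : i = i₀
      · subst hii
        simp [EuclideanSpace.single_apply, ht]
      · simp [EuclideanSpace.single_apply, hii]
    have hsplit : ∀ g : Fin n → ℝ, ∑ i, g i = g i₀ + ∑ i ∈ Finset.univ.erase i₀, g i :=
      fun g => (Finset.add_sum_erase Finset.univ g (Finset.mem_univ i₀)).symm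
    constructor
    · show (c + D y) ∈ B
      rw [hB, Metric.mem_closedBall, dist_zero_right]
      have h2 : ‖(c + D y)‖ ^ 2 ≤ 1 := by
        rw [hnormsq, hsplit]
        have h3 : ∑ i ∈ Finset.univ.erase i₀, ((c + D y) i) ^ 2
            = β ^ 2 * (∑ i, (y i) ^ 2 - t ^ 2) := by
          have h4 : ∀ i ∈ Finset.univ.erase i₀, ((c + D y) i) ^ 2 = β ^ 2 * (y i) ^ 2 := by
            intro i hi
            simp only [Finset.mem_erase] at hi
            rw [hcoord i, if_neg hi.1]; ring
          rw [Finset.sum_congr rfl h4, ← Finset.mul_sum]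
          congr 1
          have := hsplit (fun i => (y i) ^ 2)
          simp only at this
          linarith [this]
        rw [h3, hcoord i₀, if_pos rfl]
        exact mem_bound1 (key t) hsum ht2
      exact le_one_of_sq_le_one (norm_nonneg _) h2
    · show (c + D y) ∈ Metric.closedBall w 1
      rw [Metric.mem_closedBall, dist_eq_norm]
      have h2 : ‖(c + D y) - w‖ ^ 2 ≤ 1 := by
        rw [hnormsq, hsplit]
        have hwc : ∀ i, ((c + D y) - w) i = (c + D y) i - w i := fun i => rfl
        have h3 : ∑ i ∈ Finset.univ.erase i₀, (((c + D y) - w) i) ^ 2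
            = β ^ 2 * (∑ i, (y i) ^ 2 - t ^ 2) := by
          have h4 : ∀ i ∈ Finset.univ.erase i₀, (((c + D y) - w) i) ^ 2 = β ^ 2 * (y i) ^ 2 := by
            intro i hi
            simp only [Finset.mem_erase] at hi
            rw [hwc, hcoord i, if_neg hi.1, hw, he]
            simp [EuclideanSpace.single_apply, hi.1]
            ring
          rw [Finset.sum_congr rfl h4, ← Finset.mul_sum]
          congr 1
          have := hsplit (fun i => (y i) ^ 2)
          simp only at this
          linarith [this]
        rw [h3, hwc, hcoord i₀, if_pos rfl, hwi]
        exact mem_bound2 (key (-t)) hsum ht2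
      exact le_one_of_sq_le_one (norm_nonneg _) h2
  -- volume computations
  have hvol1 : volume (c +ᵥ (⇑D '' B)) = ENNReal.ofReal (α * β ^ (n - 1)) * volume B := by
    rw [measure_vadd (μ := volume), Measure.addHaar_image_linearMap, hdet,
      abs_of_nonneg (by positivity)]
  have hmono : ENNReal.ofReal (α * β ^ (n - 1)) * volume B ≤ volume (B ∩ Metric.closedBall v 1) := by
    rw [← hvol1, hvol_eq]
    exact measure_mono hsub
  have hVBne : volume B ≠ ⊤ := measure_closedBall_lt_top.ne
  have hVBpos : 0 < (volume B).toReal :=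
    ENNReal.toReal_pos (Metric.measure_closedBall_pos volume _ one_pos).ne' hVBne
  have hVIne : volume (B ∩ Metric.closedBall v 1) ≠ ⊤ :=
    ((measure_mono Set.inter_subset_left).trans_lt measure_closedBall_lt_top).ne
  have hstep : α * β ^ (n - 1) * (volume B).toReal ≤ (volume (B ∩ Metric.closedBall v 1)).toReal := by
    have h1 := ENNReal.toReal_le_toReal
      (ENNReal.mul_ne_top ENNReal.ofReal_ne_top hVBne) hVIne |>.mpr hmono
    rwa [ENNReal.toReal_mul, ENNReal.toReal_ofReal (by positivity)] at h1
  rw [ge_iff_le, le_div_iff₀ hVBpos]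
  calc Real.sqrt (1 / (2 * Real.pi * N)) * m ^ ((N + 1)/2) * (volume B).toReal
      ≤ (2 * s ^ n / q) * r ^ (n + 1) * (volume B).toReal := by
        rw [hrpow]
        have h7 := mul_le_mul_of_nonneg_right hcore (pow_nonneg hr0 (n+1))
        exact mul_le_mul_of_nonneg_right h7 hVBpos.le
    _ = α * β ^ (n - 1) * (volume B).toReal := by rw [hαβ]
    _ ≤ (volume (B ∩ Metric.closedBall v 1)).toReal := hstep
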